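/- Let θ, φ : [0,1] → ℝ be continuously differentiable with φ(1)·θ(1) = 0. Then the upper tail dependence coefficient of C_{θ,φ} satisfies λ = lim_{u→1⁻} (1 − 2u + C_{θ,φ}(u,u))/(1 − u) = −φ(1)²·θ'(1). -/

import Mathlib

open Filter Set

theorem stmt4 (θ φ : ℝ → ℝ)
    (hθ : ContDiffOn ℝ 1 θ (Set.Icc 0 1))
    (hφ : ContDiffOn ℝ 1 φ (Set.Icc 0 1))
    (hb : φ 1 * θ 1 = 0) :
    Filter.Tendsto
      (fun u : ℝ => (1 - 2 * u + (u * u + θ (max u u) * φ u * φ u)) / (1 - u))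
      (nhdsWithin 1 (Set.Iio 1))
      (nhds (-(φ 1 ^ 2 * derivWithin θ (Set.Icc 0 1) 1))) := by
  have h1 : (1:ℝ) ∈ Set.Icc (0:ℝ) 1 := by norm_num
  have h0 : θ 1 * φ 1 = 0 := by rw [mul_comm]; exact hb
  have hθd := (hθ.differentiableOn one_ne_zero 1 h1).hasDerivWithinAt
  have hφd := (hφ.differentiableOn one_ne_zero 1 h1).hasDerivWithinAt
  set θ' := derivWithin θ (Set.Icc 0 1) 1 with hθ'
  set φ' := derivWithin φ (Set.Icc 0 1) 1 with hφ'
  have hg : HasDerivWithinAt (fun u => θ u * φ u * φ u)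
      ((θ' * φ 1 + θ 1 * φ') * φ 1 + θ 1 * φ 1 * φ') (Set.Icc 0 1) 1 :=
    (hθd.mul hφd).mul hφd
  have hval : (θ' * φ 1 + θ 1 * φ') * φ 1 + θ 1 * φ 1 * φ' = φ 1 ^ 2 * θ' := by
    linear_combination 2 * φ' * h0
  rw [hval] at hg
  have hslope := hasDerivWithinAt_iff_tendsto_slope.mp hg
  rw [Set.Icc_sdiff_right, nhdsWithin_Ico_eq_nhdsLT zero_lt_one] at hslope
  have hlin : Tendsto (fun u : ℝ => 1 - u) (nhdsWithin 1 (Set.Iio 1)) (nhds 0) := by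
    have h : Continuous (fun u : ℝ => 1 - u) := continuous_const.sub continuous_id
    have h2 := (h.tendsto (1:ℝ)).mono_left (nhdsWithin_le_nhds (s := Set.Iio (1:ℝ)))
    simpa using h2
  have hcomb := hlin.sub hslope
  have heq : (0:ℝ) - φ 1 ^ 2 * θ' = -(φ 1 ^ 2 * θ') := by ring
  rw [heq] at hcomb
  refine hcomb.congr' ?_
  filter_upwards [self_mem_nhdsWithin] with u hu
  have hu1 : u ≠ 1 := ne_of_lt hu
  have hne : (1:ℝ) - u ≠ 0 := sub_ne_zero.mpr (Ne.symm hu1)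
  have hne' : u - 1 ≠ 0 := sub_ne_zero.mpr hu1
  have hg1 : θ 1 * φ 1 * φ 1 = 0 := by rw [h0, zero_mul]
  simp only [slope_def_field, max_self, hg1]
  field_simp [hne, hne']
  ring
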